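/- For every α ∈ ℕ₀: (i) for all integers k and reals R with k ≥ R > 2α + 2, P(Γ_k^{(α)} ≤ R) ≤ 3^{2α+1} R^{α+1} P(Γ_{k−2α−2} ≤ R); (ii) for all integers k and reals R with 1 ≤ k ≤ R, P(Γ_k^{(α)} ≥ R) ≤ 4^α k^α P(Γ_{k+α} ≥ R). Here Γ_j denotes a Gamma-distributed random variable with shape j and rate 1. (Comparison of the tails of the radii of the Landau-level-α Ginibre-type ensemble with Gamma tails.) -/

import Mathlib

open MeasureTheory Filter Set

noncomputable section

/-- The orthonormal generalized Laguerre polynomial `L_α^{(β)}` of degree `α`, written in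
terms of `n = α + β ≥ 0`: `√(α!/n!) · Σ_{ℓ=0}^{α} C(n, α−ℓ) (−x)^ℓ/ℓ!`. -/
def lagNorm (α n : ℕ) (x : ℝ) : ℝ :=
  Real.sqrt ((Nat.factorial α : ℝ) / (Nat.factorial n : ℝ)) *
    ∑ ℓ ∈ Finset.range (α + 1), (Nat.choose n (α - ℓ) : ℝ) * (-x) ^ ℓ / (Nat.factorial ℓ : ℝ)

/-- The probability density of `Γ_j^{(α)}`:
`x ↦ L_α^{(j−α−1)}(x)² x^{j−α−1} e^{−x}` on `(0,∞)`. -/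
def ginTypePdf (α j : ℕ) (x : ℝ) : ℝ :=
  (lagNorm α (j - 1) x) ^ 2 * x ^ ((j : ℤ) - (α : ℤ) - 1) * Real.exp (-x)

/-- The distribution function `P(Γ_j^{(α)} ≤ R)`. -/
def ginTypeCdf (α j : ℕ) (R : ℝ) : ℝ := ∫ x in Set.Ioc (0:ℝ) R, ginTypePdf α j x

/-- The distribution function of a Gamma random variable with shape `j ≥ 1` and rate `1`. -/
def gammaCdf (j : ℕ) (R : ℝ) : ℝ :=
  (1 / (Nat.factorial (j - 1) : ℝ)) * ∫ x in Set.Ioc (0:ℝ) R, x ^ (j - 1) * Real.exp (-x)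

namespace GinAux


/-- `F n α q = ∑_{m=0}^{α} (-1)^m C(n, α-m) C(q+m, m)`. -/
def F (n α q : ℕ) : ℤ :=
  ∑ m ∈ Finset.range (α+1), (-1)^m * (n.choose (α-m) : ℤ) * ((q+m).choose m : ℤ)

/-- Coefficient of `x^α` in `(1+x)^(n-q-1)`. -/
def G (n α q : ℕ) : ℤ :=
  if q < n then ((n-1-q).choose α : ℤ) else (-1)^α * ((q-n+α).choose α : ℤ)

lemma F_zero (n q : ℕ) : F n 0 q = 1 := by simp [F]

lemma G_zero (n q : ℕ) : G n 0 q = 1 := by simp [G]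

lemma F_succ_zero (n α : ℕ) : F n (α+1) 0 = (n.choose (α+1) : ℤ) - F n α 0 := by
  rw [F, Finset.sum_range_succ' _ (α+1), F]
  have h : ∀ x ∈ Finset.range (α+1),
      (-1:ℤ)^(x+1) * (n.choose (α+1-(x+1)) : ℤ) * (((0:ℕ)+(x+1)).choose (x+1) : ℤ)
      = -((-1)^x * (n.choose (α-x) : ℤ) * (((0:ℕ)+x).choose x : ℤ)) := by
    intro x _
    have e : α+1-(x+1) = α - x := by omega
    rw [e, Nat.zero_add, Nat.zero_add, Nat.choose_self, Nat.choose_self, pow_succ]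
    push_cast; ring
  rw [Finset.sum_congr rfl h, Finset.sum_neg_distrib]
  simp only [pow_zero, one_mul, Nat.sub_zero, Nat.zero_add, Nat.choose_zero_right,
    Nat.cast_one, mul_one]
  ring

lemma F_base (n α : ℕ) : F n α 0 = G n α 0 := by
  induction α with
  | zero => rw [F_zero, G_zero]
  | succ α ih =>
    rw [F_succ_zero, ih]
    rcases Nat.eq_zero_or_pos n with hn | hn
    · subst hn
      simp [G, Nat.choose_eq_zero_of_lt (Nat.succ_pos α), pow_succ]
    · have h1 : G n α 0 = ((n-1).choose α : ℤ) := by simp [G, hn]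
      have h2 : G n (α+1) 0 = ((n-1).choose (α+1) : ℤ) := by simp [G, hn]
      rw [h1, h2]
      have hp := Nat.choose_succ_succ' (n-1) α
      have hn' : n - 1 + 1 = n := by omega
      rw [hn'] at hp
      rw [hp]
      push_cast; ring

lemma F_rec (n α q : ℕ) : F n (α+1) (q+1) = F n (α+1) q - F n α (q+1) := by
  have key : ∀ m ∈ Finset.range (α+2),
      (-1:ℤ)^m * (n.choose (α+1-m) : ℤ) * ((q+1+m).choose m : ℤ) =
      (-1)^m * (n.choose (α+1-m) : ℤ) * ((q+m).choose m : ℤ)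
        + (if m = 0 then 0 else (-1)^m * (n.choose (α+1-m) : ℤ) * ((q+m).choose (m-1) : ℤ)) := by
    intro m _
    rcases Nat.eq_zero_or_pos m with hm | hm
    · subst hm; simp
    · obtain ⟨m', rfl⟩ : ∃ m', m = m' + 1 := ⟨m-1, by omega⟩
      simp only [if_neg (Nat.succ_ne_zero m'), Nat.add_sub_cancel]
      have h5 : (q+1+(m'+1)).choose (m'+1) = (q+(m'+1)).choose m' + (q+(m'+1)).choose (m'+1) := by
        have hp := Nat.choose_succ_succ' (q+(m'+1)) m'
        have h1 : q+(m'+1)+1 = q+1+(m'+1) := by omega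
        rw [h1] at hp
        exact hp
      rw [h5]
      push_cast
      ring
  rw [F, Finset.sum_congr rfl key, Finset.sum_add_distrib]
  have h2 : ∑ m ∈ Finset.range (α+2),
      (if m = 0 then 0 else (-1:ℤ)^m * (n.choose (α+1-m) : ℤ) * ((q+m).choose (m-1) : ℤ))
      = - F n α (q+1) := by
    rw [Finset.sum_range_succ' _ (α+1)]
    simp only [if_neg (Nat.succ_ne_zero _), if_pos rfl, add_zero, Nat.add_sub_cancel]
    have h6 : ∀ m ∈ Finset.range (α+1),
        (-1:ℤ)^(m+1) * (n.choose (α+1-(m+1)) : ℤ) * ((q+(m+1)).choose m : ℤ)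
        = -((-1)^m * (n.choose (α-m) : ℤ) * ((q+1+m).choose m : ℤ)) := by
      intro m _
      have h3 : α + 1 - (m+1) = α - m := by omega
      have h4 : q + (m+1) = q + 1 + m := by omega
      rw [h3, h4, pow_succ]
      ring
    rw [Finset.sum_congr rfl h6, Finset.sum_neg_distrib, F]
    simp
  have hF : F n (α+1) q = ∑ m ∈ Finset.range (α+2),
      (-1:ℤ)^m * (n.choose (α+1-m) : ℤ) * ((q+m).choose m : ℤ) := by rw [F]
  rw [h2, ← hF]
  ring

lemma G_rec (n α q : ℕ) : G n (α+1) (q+1) = G n (α+1) q - G n α (q+1) := by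
  rcases lt_trichotomy (q+1) n with h | h | h
  · have hq : q < n := by omega
    simp only [G, if_pos h, if_pos hq]
    have hp := Nat.choose_succ_succ' (n-1-(q+1)) α
    have h1 : n - 1 - (q+1) + 1 = n - 1 - q := by omega
    rw [h1] at hp
    rw [hp]
    push_cast
    ring
  · have hq : q < n := by omega
    simp only [G, if_neg (by omega : ¬ q + 1 < n), if_pos hq]
    have h1 : n - 1 - q = 0 := by omega
    have h2 : q + 1 - n = 0 := by omega
    rw [h1, h2, Nat.zero_add, Nat.zero_add, Nat.choose_self, Nat.choose_self,
      Nat.choose_eq_zero_of_lt (Nat.succ_pos α), pow_succ]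
    push_cast
    ring
  · simp only [G, if_neg (by omega : ¬ q + 1 < n), if_neg (by omega : ¬ q < n)]
    have h1 : q + 1 - n + (α + 1) = (q - n + (α+1)) + 1 := by omega
    have h2 : q + 1 - n + α = q - n + (α + 1) := by omega
    have hp := Nat.choose_succ_succ' (q - n + (α+1)) α
    rw [h1, h2, hp]
    push_cast
    ring

theorem F_eq_G (n : ℕ) : ∀ α q, F n α q = G n α q := by
  intro α
  induction α with
  | zero => intro q; rw [F_zero, G_zero]
  | succ α ih =>
    intro q
    induction q with
    | zero => exact F_base n (α+1)
    | succ q ihq => rw [F_rec, G_rec, ihq, ih]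

lemma inner_sum (n α q : ℕ) :
    ∑ m ∈ Finset.range (α+1),
      ((n.choose (α-m) : ℝ) * (-1)^m / (m.factorial : ℝ)) * (((q+m).factorial : ℝ))
    = (q.factorial : ℝ) * (F n α q : ℝ) := by
  rw [F]
  push_cast
  rw [Finset.mul_sum]
  refine Finset.sum_congr rfl fun m _ => ?_
  have h := Nat.choose_mul_factorial_mul_factorial (Nat.le_add_left m q)
  rw [Nat.add_sub_cancel] at h
  have h' : (((q+m).factorial : ℝ)) = ((q+m).choose m : ℝ) * (m.factorial : ℝ) * (q.factorial : ℝ) := by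
    rw [← h]; push_cast; ring
  rw [h']
  have hm : (m.factorial : ℝ) ≠ 0 := Nat.cast_ne_zero.mpr m.factorial_ne_zero
  field_simp

theorem total (n α : ℕ) :
    ∑ ℓ ∈ Finset.range (α+1), ∑ m ∈ Finset.range (α+1),
      ((n.choose (α-ℓ) : ℝ) * (-1)^ℓ / (ℓ.factorial : ℝ)) *
        ((n.choose (α-m) : ℝ) * (-1)^m / (m.factorial : ℝ)) *
        ((n+ℓ+m-α).factorial : ℝ)
    = (n.factorial : ℝ) / (α.factorial : ℝ) := by
  rw [Finset.sum_eq_single_of_mem α (Finset.self_mem_range_succ α)]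
  · have he : ∀ m ∈ Finset.range (α+1),
        ((n.choose (α-α) : ℝ) * (-1)^α / (α.factorial : ℝ)) *
          ((n.choose (α-m) : ℝ) * (-1)^m / (m.factorial : ℝ)) *
          ((n+α+m-α).factorial : ℝ)
        = ((n.choose (α-α) : ℝ) * (-1)^α / (α.factorial : ℝ)) *
          (((n.choose (α-m) : ℝ) * (-1)^m / (m.factorial : ℝ)) * ((n+m).factorial : ℝ)) := by
      intro m _
      have : n + α + m - α = n + m := by omega
      rw [this, mul_assoc]
    rw [Finset.sum_congr rfl he, ← Finset.mul_sum, inner_sum, F_eq_G]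
    have hG : G n α n = (-1)^α := by
      rw [G, if_neg (lt_irrefl n)]
      simp [Nat.sub_self]
    rw [hG, Nat.sub_self, Nat.choose_zero_right]
    push_cast
    have hα : (α.factorial : ℝ) ≠ 0 := Nat.cast_ne_zero.mpr α.factorial_ne_zero
    field_simp
    have hsq : ((-1:ℝ))^α * ((-1:ℝ))^α = 1 := by
      rw [← pow_add, ← two_mul, pow_mul]
      norm_num
    linear_combination hsq
  · intro ℓ hℓr hℓne
    have hℓα : ℓ < α := by
      have := Finset.mem_range.mp hℓr; omega
    rcases le_or_gt α (n+ℓ) with hle | hlt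
    · set q := n + ℓ - α with hq
      have he : ∀ m ∈ Finset.range (α+1),
          ((n.choose (α-ℓ) : ℝ) * (-1)^ℓ / (ℓ.factorial : ℝ)) *
            ((n.choose (α-m) : ℝ) * (-1)^m / (m.factorial : ℝ)) *
            ((n+ℓ+m-α).factorial : ℝ)
          = ((n.choose (α-ℓ) : ℝ) * (-1)^ℓ / (ℓ.factorial : ℝ)) *
            (((n.choose (α-m) : ℝ) * (-1)^m / (m.factorial : ℝ)) * ((q+m).factorial : ℝ)) := by
        intro m _
        have : n + ℓ + m - α = q + m := by omega
        rw [this, mul_assoc]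
      rw [Finset.sum_congr rfl he, ← Finset.mul_sum, inner_sum, F_eq_G]
      have hG : G n α q = 0 := by
        rw [G, if_pos (by omega : q < n)]
        have : n - 1 - q = α - ℓ - 1 := by omega
        rw [this, Nat.choose_eq_zero_of_lt (by omega : α - ℓ - 1 < α)]
        simp
      rw [hG]
      simp
    · have hc : (n.choose (α-ℓ) : ℝ) = 0 := by
        rw [Nat.choose_eq_zero_of_lt (by omega : n < α - ℓ)]
        simp
      refine Finset.sum_eq_zero fun m _ => ?_
      rw [hc]
      ring



lemma pow_mul_sub_le (m k : ℕ) : (k+1)^m * (k - (m+1)) ≤ k^(m+1) := by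
  induction m with
  | zero => simpa using Nat.sub_le k 1
  | succ m ih =>
    have h1 : (k+1) * (k - (m+2)) ≤ k * (k - (m+1)) := by
      rcases le_or_gt k (m+1) with h | h
      · have : k - (m+2) = 0 := by omega
        simp [this]
      · obtain ⟨t, rfl⟩ : ∃ t, k = m + 2 + t := ⟨k - (m+2), by omega⟩
        have e1 : m + 2 + t - (m+2) = t := by omega
        have e2 : m + 2 + t - (m+1) = t + 1 := by omega
        rw [e1, e2]
        nlinarith
    calc (k+1)^(m+1) * (k - (m+2)) = (k+1)^m * ((k+1) * (k - (m+2))) := by ring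
      _ ≤ (k+1)^m * (k * (k - (m+1))) := Nat.mul_le_mul_left _ h1
      _ = ((k+1)^m * (k - (m+1))) * k := by ring
      _ ≤ k^(m+1) * k := Nat.mul_le_mul_right _ ih
      _ = k^(m+2) := by ring

lemma exp_two_lt_eight : Real.exp 2 < 8 := by
  have h := Real.exp_one_lt_d9
  have h2 : Real.exp 2 = Real.exp 1 * Real.exp 1 := by
    rw [← Real.exp_add]; norm_num
  nlinarith [Real.exp_pos 1]

lemma m2_pow (m : ℕ) (hm : 1 ≤ m) : (m+2)^m ≤ 8 * m^m := by
  have hm' : (0:ℝ) < (m:ℝ) := by exact_mod_cast hm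
  have key : ((m:ℝ)+2)^m ≤ 8 * (m:ℝ)^m := by
    have h1 : (m:ℝ)+2 = (m:ℝ) * (1 + 2/(m:ℝ)) := by field_simp
    have h2 : (1 + 2/(m:ℝ)) ≤ Real.exp (2/(m:ℝ)) := by
      have := Real.add_one_le_exp (2/(m:ℝ)); linarith
    have h3 : (0:ℝ) ≤ 1 + 2/(m:ℝ) := by positivity
    have h4 : (1 + 2/(m:ℝ))^m ≤ Real.exp (2/(m:ℝ)) ^ m := pow_le_pow_left₀ h3 h2 m
    have h5 : Real.exp (2/(m:ℝ)) ^ m = Real.exp 2 := by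
      rw [← Real.exp_nat_mul]
      congr 1
      field_simp
    calc ((m:ℝ)+2)^m = (m:ℝ)^m * (1 + 2/(m:ℝ))^m := by rw [h1, mul_pow]
      _ ≤ (m:ℝ)^m * Real.exp 2 := by
          rw [← h5]; exact mul_le_mul_of_nonneg_left h4 (by positivity)
      _ ≤ (m:ℝ)^m * 8 := mul_le_mul_of_nonneg_left exp_two_lt_eight.le (by positivity)
      _ = 8 * (m:ℝ)^m := by ring
  exact_mod_cast (by push_cast; exact key : ((m+2:ℕ):ℝ)^m ≤ ((8 * m^m : ℕ):ℝ))

lemma base_B : ∀ α : ℕ, 4^α * (2*α+3)^(2*α+1) ≤ 3^(2*α+1) * α.factorial * (2*α+2).factorial := by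
  have step : ∀ α : ℕ, 3 ≤ α →
      4^α * (2*α+3)^(2*α+1) ≤ 3^(2*α+1) * α.factorial * (2*α+2).factorial →
      4^(α+1) * (2*(α+1)+3)^(2*(α+1)+1) ≤
        3^(2*(α+1)+1) * (α+1).factorial * (2*(α+1)+2).factorial := by
    intro α hα ih
    have hm := m2_pow (2*α+3) (by omega)
    have e1 : 2*α+3+2 = 2*α+5 := by omega
    rw [e1] at hm
    have key1 : 4^(α+1) * (2*(α+1)+3)^(2*(α+1)+1) = 4 * 4^α * ((2*α+5)^(2*α+3)) := by
      ring_nf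
    have key2 : (2*α+5)^(2*α+3) ≤ 8 * (2*α+3)^(2*α+3) := hm
    calc 4^(α+1) * (2*(α+1)+3)^(2*(α+1)+1)
        = 4 * 4^α * ((2*α+5)^(2*α+3)) := key1
      _ ≤ 4 * 4^α * (8 * (2*α+3)^(2*α+3)) := Nat.mul_le_mul_left _ key2
      _ = 32 * (2*α+3)^2 * (4^α * (2*α+3)^(2*α+1)) := by ring
      _ ≤ 32 * (2*α+3)^2 * (3^(2*α+1) * α.factorial * (2*α+2).factorial) :=
          Nat.mul_le_mul_left _ ih
      _ ≤ 9 * (α+1) * ((2*α+4)*(2*α+3)) * (3^(2*α+1) * α.factorial * (2*α+2).factorial) := by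
          refine Nat.mul_le_mul_right _ ?_
          nlinarith
      _ = 3^(2*(α+1)+1) * (α+1).factorial * (2*(α+1)+2).factorial := by
          have f1 : (α+1).factorial = (α+1) * α.factorial := Nat.factorial_succ α
          have f2 : (2*(α+1)+2).factorial = (2*α+4) * ((2*α+3) * (2*α+2).factorial) := by
            have e2 : 2*(α+1)+2 = (2*α+3)+1 := by omega
            rw [e2, Nat.factorial_succ, Nat.factorial_succ]
          rw [f1, f2]
          ring
  intro α
  rcases lt_or_ge α 3 with h | h
  · interval_cases α <;> norm_num [Nat.factorial]
  · induction α, h using Nat.le_induction with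
    | base => norm_num [Nat.factorial]
    | succ α hα ih => exact step α hα ih

lemma arith_i (α k : ℕ) (hk : 2*α+3 ≤ k) :
    4^α * k^(2*α+1) * (k-(2*α+3)).factorial ≤ 3^(2*α+1) * α.factorial * (k-1).factorial := by
  induction k, hk using Nat.le_induction with
  | base =>
    have e1 : 2*α+3 - (2*α+3) = 0 := by omega
    have e2 : 2*α+3 - 1 = 2*α+2 := by omega
    rw [e1, e2]
    simpa using base_B α
  | succ k hk ih =>
    have e1 : k+1 - (2*α+3) = (k - (2*α+3)) + 1 := by omega
    have e2 : (k - (2*α+3)) + 1 = k - (2*α+2) := by omega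
    have e3 : k+1-1 = (k-1) + 1 := by omega
    rw [e1, Nat.factorial_succ, e2, e3, Nat.factorial_succ]
    have h1 : (k+1)^(2*α+1) * (k - (2*α+2)) ≤ k^(2*α+2) := pow_mul_sub_le (2*α+1) k
    have e4 : k - 1 + 1 = k := by omega
    calc 4^α * (k+1)^(2*α+1) * ((k - (2*α+2)) * (k-(2*α+3)).factorial)
        = ((k+1)^(2*α+1) * (k - (2*α+2))) * (4^α * (k-(2*α+3)).factorial) := by ring
      _ ≤ k^(2*α+2) * (4^α * (k-(2*α+3)).factorial) := Nat.mul_le_mul_right _ h1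
      _ = k * (4^α * k^(2*α+1) * (k-(2*α+3)).factorial) := by ring
      _ ≤ k * (3^(2*α+1) * α.factorial * (k-1).factorial) := Nat.mul_le_mul_left _ ih
      _ = 3^(2*α+1) * α.factorial * ((k-1+1) * (k-1).factorial) := by rw [e4]; ring

lemma arith_ii (α j : ℕ) : (j+α).factorial ≤ α.factorial * (j+1)^α * j.factorial := by
  induction α with
  | zero => simp
  | succ α ih =>
    have e1 : j + (α+1) = (j + α) + 1 := by omega
    rw [e1, Nat.factorial_succ]
    have h1 : j + α + 1 ≤ (α+1) * (j+1) := by nlinarith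
    calc (j+α+1) * (j+α).factorial
        ≤ ((α+1)*(j+1)) * (α.factorial * (j+1)^α * j.factorial) :=
          Nat.mul_le_mul h1 ih
      _ = (α+1).factorial * (j+1)^(α+1) * j.factorial := by
          rw [Nat.factorial_succ]; ring


def coef (α n ℓ : ℕ) : ℝ := (n.choose (α-ℓ) : ℝ) * (-1)^ℓ / (ℓ.factorial : ℝ)

def Ssum (α n : ℕ) (x : ℝ) : ℝ :=
  ∑ ℓ ∈ Finset.range (α + 1), (Nat.choose n (α - ℓ) : ℝ) * (-x) ^ ℓ / (Nat.factorial ℓ : ℝ)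

lemma integrableOn_pow_exp (p : ℕ) :
    IntegrableOn (fun x : ℝ => x ^ p * Real.exp (-x)) (Set.Ioi 0) := by
  have h := Real.GammaIntegral_convergent (s := (p:ℝ)+1) (by positivity)
  refine h.congr_fun (fun x hx => ?_) measurableSet_Ioi
  beta_reduce
  rw [add_sub_cancel_right, Real.rpow_natCast, mul_comm]

lemma integral_pow_exp (p : ℕ) :
    ∫ x in Set.Ioi (0:ℝ), x ^ p * Real.exp (-x) = (p.factorial : ℝ) := by
  have h := Real.Gamma_eq_integral (s := (p:ℝ)+1) (by positivity)
  calc ∫ x in Set.Ioi (0:ℝ), x ^ p * Real.exp (-x)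
      = ∫ x in Set.Ioi (0:ℝ), Real.exp (-x) * x ^ ((p:ℝ)+1-1) :=
        setIntegral_congr_fun measurableSet_Ioi (fun x _ => by
          rw [add_sub_cancel_right, Real.rpow_natCast, mul_comm])
    _ = Real.Gamma ((p:ℝ)+1) := h.symm
    _ = (p.factorial : ℝ) := Real.Gamma_nat_eq_factorial p

lemma Ssum_eq_coef (α n : ℕ) (x : ℝ) :
    Ssum α n x = ∑ ℓ ∈ Finset.range (α+1), coef α n ℓ * x ^ ℓ := by
  refine Finset.sum_congr rfl fun ℓ _ => ?_
  rw [coef, neg_pow]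
  ring

lemma Ssum_abs_le (α n : ℕ) (x : ℝ) (hx : 0 ≤ x) :
    |Ssum α n x| ≤ (x + n)^α / (α.factorial : ℝ) := by
  have h1 : |Ssum α n x| ≤
      ∑ ℓ ∈ Finset.range (α+1), (n.choose (α-ℓ) : ℝ) * x^ℓ / (ℓ.factorial : ℝ) := by
    refine (Finset.abs_sum_le_sum_abs _ _).trans (le_of_eq ?_)
    refine Finset.sum_congr rfl fun ℓ _ => ?_
    rw [abs_div, abs_mul, abs_pow, abs_neg, abs_of_nonneg hx,
      abs_of_nonneg (by positivity : (0:ℝ) ≤ (n.choose (α-ℓ) : ℝ)),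
      abs_of_nonneg (by positivity : (0:ℝ) ≤ ((ℓ.factorial : ℕ) : ℝ))]
  refine h1.trans ?_
  rw [add_pow, Finset.sum_div]
  refine Finset.sum_le_sum fun ℓ hℓ => ?_
  have hℓα : ℓ ≤ α := by
    have := Finset.mem_range.mp hℓ; omega
  have hc : (n.choose (α-ℓ) : ℝ) ≤ (n:ℝ)^(α-ℓ) / ((α-ℓ).factorial : ℝ) := by
    have := Nat.choose_le_pow_div (α := ℝ) (α-ℓ) n
    push_cast at this ⊢
    exact this
  have hfacts : (α.factorial : ℝ) =
      (α.choose ℓ : ℝ) * (ℓ.factorial : ℝ) * ((α-ℓ).factorial : ℝ) := by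
    rw [← Nat.choose_mul_factorial_mul_factorial hℓα]
    push_cast
    ring
  have hR : x^ℓ * (n:ℝ)^(α-ℓ) * (α.choose ℓ : ℝ) / (α.factorial : ℝ)
      = ((n:ℝ)^(α-ℓ)/((α-ℓ).factorial : ℝ)) * x^ℓ / (ℓ.factorial : ℝ) := by
    rw [hfacts]
    have h1 : (α.choose ℓ : ℝ) ≠ 0 := by
      have := Nat.choose_pos hℓα; positivity
    have h2 : ((ℓ.factorial : ℕ) : ℝ) ≠ 0 := by positivity
    have h3 : (((α-ℓ).factorial : ℕ) : ℝ) ≠ 0 := by positivity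
    field_simp
  rw [hR]
  gcongr

lemma pdf_repr (α k : ℕ) (x : ℝ) :
    ginTypePdf α k x = ((α.factorial : ℝ) / ((k-1).factorial : ℝ)) * (Ssum α (k-1) x)^2 *
      x ^ ((k:ℤ) - α - 1) * Real.exp (-x) := by
  rw [ginTypePdf, lagNorm, mul_pow,
    Real.sq_sqrt (by positivity : (0:ℝ) ≤ (α.factorial : ℝ) / ((k-1).factorial : ℝ))]
  rfl

def trm (α n : ℕ) (p : ℕ × ℕ) (x : ℝ) : ℝ :=
  (((α.factorial : ℝ) / (n.factorial : ℝ)) * coef α n p.1 * coef α n p.2) *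
    (x ^ (n + p.1 + p.2 - α) * Real.exp (-x))

lemma coef_zero {α n ℓ : ℕ} (h : n < α - ℓ) : coef α n ℓ = 0 := by
  rw [coef, Nat.choose_eq_zero_of_lt h]
  simp

lemma pdf_expand (α k : ℕ) (hk : 1 ≤ k) {x : ℝ} (hx : x ∈ Set.Ioi (0:ℝ)) :
    ginTypePdf α k x
      = ∑ p ∈ Finset.range (α+1) ×ˢ Finset.range (α+1), trm α (k-1) p x := by
  have hx0 : (0:ℝ) < x := hx
  rw [pdf_repr, Ssum_eq_coef, pow_two, Finset.sum_mul_sum, Finset.sum_product,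
    Finset.mul_sum, Finset.sum_mul, Finset.sum_mul]
  refine Finset.sum_congr rfl fun ℓ hℓ => ?_
  rw [Finset.mul_sum, Finset.sum_mul, Finset.sum_mul]
  refine Finset.sum_congr rfl fun m hm => ?_
  rw [trm]
  rcases le_or_gt α ((k-1) + ℓ + m) with hcase | hcase
  · have hzp : x^ℓ * x^m * x ^ ((k:ℤ) - α - 1) = x ^ ((k-1) + ℓ + m - α) := by
      rw [← zpow_natCast x ℓ, ← zpow_natCast x m, ← zpow_add₀ hx0.ne', ← zpow_add₀ hx0.ne',
        ← zpow_natCast x ((k-1) + ℓ + m - α)]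
      congr 1
      push_cast [Nat.cast_sub hcase]
      omega
    calc ((α.factorial : ℝ) / ((k-1).factorial : ℝ)) * (coef α (k-1) ℓ * x^ℓ * (coef α (k-1) m * x^m)) *
          x ^ ((k:ℤ) - α - 1) * Real.exp (-x)
        = ((α.factorial : ℝ) / ((k-1).factorial : ℝ)) * coef α (k-1) ℓ * coef α (k-1) m *
            ((x^ℓ * x^m * x ^ ((k:ℤ) - α - 1)) * Real.exp (-x)) := by ring
      _ = ((α.factorial : ℝ) / ((k-1).factorial : ℝ)) * coef α (k-1) ℓ * coef α (k-1) m *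
            (x ^ ((k-1) + ℓ + m - α) * Real.exp (-x)) := by rw [hzp]
  · have h0 : coef α (k-1) ℓ = 0 := coef_zero (by omega)
    rw [h0]
    ring

lemma trm_integrableOn (α n : ℕ) (p : ℕ × ℕ) :
    IntegrableOn (trm α n p) (Set.Ioi (0:ℝ)) := by
  have h : trm α n p = fun x : ℝ =>
      (((α.factorial : ℝ) / (n.factorial : ℝ)) * coef α n p.1 * coef α n p.2) *
        (x ^ (n + p.1 + p.2 - α) * Real.exp (-x)) := rfl
  rw [h]
  exact (integrableOn_pow_exp _).const_mul _

lemma pdf_integrableOn (α k : ℕ) (hk : 1 ≤ k) :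
    IntegrableOn (ginTypePdf α k) (Set.Ioi (0:ℝ)) := by
  have h : IntegrableOn
      (fun x => ∑ p ∈ Finset.range (α+1) ×ˢ Finset.range (α+1), trm α (k-1) p x)
      (Set.Ioi (0:ℝ)) :=
    integrable_finset_sum (μ := volume.restrict (Set.Ioi (0:ℝ)))
      (Finset.range (α+1) ×ˢ Finset.range (α+1)) (fun p _ => trm_integrableOn α (k-1) p)
  exact h.congr_fun (fun x hx => (pdf_expand α k hk hx).symm) measurableSet_Ioi

lemma pdf_mass (α k : ℕ) (hk : 1 ≤ k) :
    ∫ x in Set.Ioi (0:ℝ), ginTypePdf α k x = 1 := by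
  rw [setIntegral_congr_fun measurableSet_Ioi (fun x hx => pdf_expand α k hk hx)]
  rw [integral_finset_sum _ (fun p _ => trm_integrableOn α (k-1) p)]
  have hval : ∀ p ∈ Finset.range (α+1) ×ˢ Finset.range (α+1),
      ∫ x in Set.Ioi (0:ℝ), trm α (k-1) p x
      = ((α.factorial : ℝ) / ((k-1).factorial : ℝ)) *
          (coef α (k-1) p.1 * coef α (k-1) p.2 * (((k-1) + p.1 + p.2 - α).factorial : ℝ)) := by
    intro p _
    have h : trm α (k-1) p = fun x : ℝ =>
        (((α.factorial : ℝ) / ((k-1).factorial : ℝ)) * coef α (k-1) p.1 * coef α (k-1) p.2) *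
          (x ^ ((k-1) + p.1 + p.2 - α) * Real.exp (-x)) := rfl
    rw [h, integral_const_mul, integral_pow_exp]
    ring
  rw [Finset.sum_congr rfl hval, ← Finset.mul_sum, Finset.sum_product]
  have ht : ∑ ℓ ∈ Finset.range (α+1), ∑ m ∈ Finset.range (α+1),
      coef α (k-1) ℓ * coef α (k-1) m * (((k-1) + ℓ + m - α).factorial : ℝ)
      = ((k-1).factorial : ℝ) / (α.factorial : ℝ) := by
    simp only [coef]
    exact total (k-1) α
  rw [ht]
  have h1 : (((k-1).factorial : ℕ) : ℝ) ≠ 0 := by positivity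
  have h2 : ((α.factorial : ℕ) : ℝ) ≠ 0 := by positivity
  field_simp

lemma gamma_tail (j : ℕ) (R : ℝ) (hR : 0 ≤ R) :
    1 - gammaCdf j R
      = (1 / ((j-1).factorial : ℝ)) * ∫ x in Set.Ioi R, x ^ (j-1) * Real.exp (-x) := by
  have h1 := (integrableOn_pow_exp (j-1)).mono_set
    (Set.Ioc_subset_Ioi_self (a := R) (b := (0:ℝ)))
  have h2 := (integrableOn_pow_exp (j-1)).mono_set (Set.Ioi_subset_Ioi hR)
  have hsplit : (∫ x in Set.Ioc (0:ℝ) R, x ^ (j-1) * Real.exp (-x))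
      + (∫ x in Set.Ioi R, x ^ (j-1) * Real.exp (-x))
      = ((j-1).factorial : ℝ) := by
    rw [← setIntegral_union Set.Ioc_disjoint_Ioi_same measurableSet_Ioi h1 h2,
      Set.Ioc_union_Ioi_eq_Ioi hR, integral_pow_exp]
  rw [gammaCdf]
  have hf : (((j-1).factorial : ℕ) : ℝ) ≠ 0 := by positivity
  field_simp
  linarith [hsplit]

lemma gin_tail (α k : ℕ) (hk : 1 ≤ k) (R : ℝ) (hR : 0 ≤ R) :
    1 - ginTypeCdf α k R = ∫ x in Set.Ioi R, ginTypePdf α k x := by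
  have h1 := (pdf_integrableOn α k hk).mono_set
    (Set.Ioc_subset_Ioi_self (a := R) (b := (0:ℝ)))
  have h2 := (pdf_integrableOn α k hk).mono_set (Set.Ioi_subset_Ioi hR)
  have hsplit : ginTypeCdf α k R + (∫ x in Set.Ioi R, ginTypePdf α k x) = 1 := by
    rw [ginTypeCdf, ← setIntegral_union Set.Ioc_disjoint_Ioi_same measurableSet_Ioi h1 h2,
      Set.Ioc_union_Ioi_eq_Ioi hR, pdf_mass α k hk]
  linarith

lemma pointwise_ii (α k : ℕ) (hk : 1 ≤ k) {R x : ℝ} (hkR : (k:ℝ) ≤ R) (hx : x ∈ Set.Ioi R) :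
    ginTypePdf α k x
      ≤ ((4:ℝ)^α * (k:ℝ)^α / ((k+α-1).factorial : ℝ)) * (x ^ (k+α-1) * Real.exp (-x)) := by
  have hk1 : (1:ℝ) ≤ (k:ℝ) := by exact_mod_cast hk
  have hRx : R < x := hx
  have hxk : (k:ℝ) ≤ x := le_of_lt (lt_of_le_of_lt hkR hRx)
  have hx0 : (0:ℝ) < x := lt_of_lt_of_le (by linarith) hxk
  have hn : (((k-1:ℕ):ℕ) : ℝ) ≤ x := by
    have : ((k-1:ℕ) : ℝ) ≤ (k:ℝ) := by exact_mod_cast Nat.sub_le k 1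
    linarith
  have hS : (Ssum α (k-1) x)^2 ≤ 4^α * x^(2*α) / (α.factorial : ℝ)^2 := by
    have h1 : |Ssum α (k-1) x| ≤ (x + ((k-1:ℕ):ℝ))^α / (α.factorial : ℝ) :=
      Ssum_abs_le α (k-1) x hx0.le
    have h2 : (x + ((k-1:ℕ):ℝ))^α ≤ (2*x)^α := by
      apply pow_le_pow_left₀ (by positivity)
      linarith
    have h3 : |Ssum α (k-1) x| ≤ (2*x)^α / (α.factorial : ℝ) :=
      h1.trans ((div_le_div_iff_of_pos_right (by positivity)).mpr h2)
    calc (Ssum α (k-1) x)^2 = |Ssum α (k-1) x|^2 := (sq_abs _).symm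
      _ ≤ ((2*x)^α / (α.factorial : ℝ))^2 := by
          apply pow_le_pow_left₀ (abs_nonneg _) h3
      _ = 4^α * x^(2*α) / (α.factorial : ℝ)^2 := by
          rw [div_pow, ← pow_mul, mul_pow, show α*2 = 2*α by ring, pow_mul, pow_mul]
          norm_num
  have hzp : x^(2*α) * x ^ ((k:ℤ) - α - 1) = x ^ (k+α-1) := by
    rw [← zpow_natCast x (2*α), ← zpow_add₀ hx0.ne', ← zpow_natCast x (k+α-1)]
    congr 1
    have : ((k+α-1 : ℕ) : ℤ) = (k:ℤ) + α - 1 := by omega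
    omega
  have hcoef : ((α.factorial : ℝ) / ((k-1).factorial : ℝ)) * (4^α / (α.factorial : ℝ)^2)
      ≤ (4:ℝ)^α * (k:ℝ)^α / ((k+α-1).factorial : ℝ) := by
    have hA : ((k+α-1).factorial : ℝ) ≤ (α.factorial : ℝ) * (k:ℝ)^α * ((k-1).factorial : ℝ) := by
      have h := arith_ii α (k-1)
      have e1 : (k-1) + α = k + α - 1 := by omega
      have e2 : (k-1) + 1 = k := by omega
      rw [e1, e2] at h
      exact_mod_cast h
    have hp1 : (0:ℝ) < ((k+α-1).factorial : ℝ) := by positivity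
    have hp2 : (0:ℝ) < ((k-1).factorial : ℝ) := by positivity
    have hp3 : (0:ℝ) < (α.factorial : ℝ) := by positivity
    rw [div_mul_div_comm, div_le_div_iff₀ (by positivity) hp1]
    calc (α.factorial : ℝ) * 4^α * ((k+α-1).factorial : ℝ)
        ≤ (α.factorial : ℝ) * 4^α * ((α.factorial : ℝ) * (k:ℝ)^α * ((k-1).factorial : ℝ)) := by
          gcongr
      _ = 4^α * (k:ℝ)^α * (((k-1).factorial : ℝ) * (α.factorial : ℝ)^2) := by ring
  rw [pdf_repr]
  calc ((α.factorial : ℝ) / ((k-1).factorial : ℝ)) * (Ssum α (k-1) x)^2 *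
        x ^ ((k:ℤ) - α - 1) * Real.exp (-x)
      ≤ ((α.factorial : ℝ) / ((k-1).factorial : ℝ)) * (4^α * x^(2*α) / (α.factorial : ℝ)^2) *
        x ^ ((k:ℤ) - α - 1) * Real.exp (-x) := by
        have hzpos : (0:ℝ) ≤ x ^ ((k:ℤ) - α - 1) := (zpow_pos hx0 _).le
        have hcpos : (0:ℝ) ≤ (α.factorial : ℝ) / ((k-1).factorial : ℝ) := by positivity
        have := mul_le_mul_of_nonneg_left hS hcpos
        have := mul_le_mul_of_nonneg_right this hzpos
        exact mul_le_mul_of_nonneg_right this (Real.exp_pos _).le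
    _ = (((α.factorial : ℝ) / ((k-1).factorial : ℝ)) * (4^α / (α.factorial : ℝ)^2)) *
        ((x^(2*α) * x ^ ((k:ℤ) - α - 1)) * Real.exp (-x)) := by ring
    _ = (((α.factorial : ℝ) / ((k-1).factorial : ℝ)) * (4^α / (α.factorial : ℝ)^2)) *
        (x ^ (k+α-1) * Real.exp (-x)) := by rw [hzp]
    _ ≤ ((4:ℝ)^α * (k:ℝ)^α / ((k+α-1).factorial : ℝ)) * (x ^ (k+α-1) * Real.exp (-x)) := by
        apply mul_le_mul_of_nonneg_right hcoef
        positivity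

lemma pointwise_i (α k : ℕ) (hk : 2*α+3 ≤ k) {R x : ℝ} (hRk : R ≤ (k:ℝ))
    (hx : x ∈ Set.Ioc (0:ℝ) R) :
    ginTypePdf α k x
      ≤ ((3:ℝ)^(2*α+1) * R^(α+1) / ((k-(2*α+3)).factorial : ℝ)) *
          (x ^ (k-(2*α+3)) * Real.exp (-x)) := by
  obtain ⟨hx0, hxR⟩ := hx
  have hR0 : (0:ℝ) < R := lt_of_lt_of_le hx0 hxR
  have hkpos : (0:ℝ) < (k:ℝ) := lt_of_lt_of_le hR0 hRk
  have hn : (((k-1:ℕ):ℕ) : ℝ) ≤ (k:ℝ) := by exact_mod_cast Nat.sub_le k 1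
  have hS : (Ssum α (k-1) x)^2 ≤ 4^α * (k:ℝ)^(2*α) / (α.factorial : ℝ)^2 := by
    have h1 : |Ssum α (k-1) x| ≤ (x + ((k-1:ℕ):ℝ))^α / (α.factorial : ℝ) :=
      Ssum_abs_le α (k-1) x hx0.le
    have h3 : |Ssum α (k-1) x| ≤ (2*(k:ℝ))^α / (α.factorial : ℝ) := by
      have hbase : (0:ℝ) ≤ x + ((k-1:ℕ):ℝ) := by
        have h9 : (0:ℝ) ≤ ((k-1:ℕ):ℝ) := Nat.cast_nonneg _
        linarith
      have h2 : (x + ((k-1:ℕ):ℝ))^α ≤ (2*(k:ℝ))^α :=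
        pow_le_pow_left₀ hbase (by linarith) α
      exact h1.trans ((div_le_div_iff_of_pos_right (by positivity)).mpr h2)
    calc (Ssum α (k-1) x)^2 = |Ssum α (k-1) x|^2 := (sq_abs _).symm
      _ ≤ ((2*(k:ℝ))^α / (α.factorial : ℝ))^2 := by
          apply pow_le_pow_left₀ (abs_nonneg _) h3
      _ = 4^α * (k:ℝ)^(2*α) / (α.factorial : ℝ)^2 := by
          rw [div_pow, ← pow_mul, mul_pow, show α*2 = 2*α by ring, pow_mul, pow_mul]
          norm_num
  have hzp : x ^ ((k:ℤ) - α - 1) = x ^ (k-(2*α+3)) * x^(α+2) := by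
    rw [← pow_add, ← zpow_natCast x (k-(2*α+3)+(α+2))]
    congr 1
    omega
  have hx2 : x^(α+2) ≤ R^(α+1) * (k:ℝ) := by
    calc x^(α+2) ≤ R^(α+2) := pow_le_pow_left₀ hx0.le hxR _
      _ = R^(α+1) * R := by ring
      _ ≤ R^(α+1) * (k:ℝ) := by
          apply mul_le_mul_of_nonneg_left hRk
          positivity
  have hcoef : ((α.factorial : ℝ) / ((k-1).factorial : ℝ)) * (4^α * (k:ℝ)^(2*α) / (α.factorial : ℝ)^2)
        * ((k:ℝ) * R^(α+1))
      ≤ ((3:ℝ)^(2*α+1) * R^(α+1) / ((k-(2*α+3)).factorial : ℝ)) := by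
    have hA : (4:ℝ)^α * (k:ℝ)^(2*α+1) * ((k-(2*α+3)).factorial : ℝ)
        ≤ 3^(2*α+1) * (α.factorial : ℝ) * ((k-1).factorial : ℝ) := by
      exact_mod_cast arith_i α k hk
    have hp1 : (0:ℝ) < ((k-(2*α+3)).factorial : ℝ) := by positivity
    have hp2 : (0:ℝ) < ((k-1).factorial : ℝ) := by positivity
    have hp3 : (0:ℝ) < (α.factorial : ℝ) := by positivity
    have key : ((α.factorial : ℝ) / ((k-1).factorial : ℝ)) *
          (4^α * (k:ℝ)^(2*α) / (α.factorial : ℝ)^2) * ((k:ℝ) * R^(α+1))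
        = (4^α * (k:ℝ)^(2*α+1) / ((α.factorial : ℝ) * ((k-1).factorial : ℝ))) * R^(α+1) := by
      field_simp
      ring
    rw [key]
    have hfrac : 4^α * (k:ℝ)^(2*α+1) / ((α.factorial : ℝ) * ((k-1).factorial : ℝ))
        ≤ 3^(2*α+1) / ((k-(2*α+3)).factorial : ℝ) := by
      rw [div_le_div_iff₀ (by positivity) hp1]
      calc 4^α * (k:ℝ)^(2*α+1) * ((k-(2*α+3)).factorial : ℝ)
          ≤ 3^(2*α+1) * (α.factorial : ℝ) * ((k-1).factorial : ℝ) := hA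
        _ = 3^(2*α+1) * ((α.factorial : ℝ) * ((k-1).factorial : ℝ)) := by ring
    calc (4^α * (k:ℝ)^(2*α+1) / ((α.factorial : ℝ) * ((k-1).factorial : ℝ))) * R^(α+1)
        ≤ (3^(2*α+1) / ((k-(2*α+3)).factorial : ℝ)) * R^(α+1) := by
          apply mul_le_mul_of_nonneg_right hfrac
          positivity
      _ = (3:ℝ)^(2*α+1) * R^(α+1) / ((k-(2*α+3)).factorial : ℝ) := by ring
  rw [pdf_repr]
  calc ((α.factorial : ℝ) / ((k-1).factorial : ℝ)) * (Ssum α (k-1) x)^2 *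
        x ^ ((k:ℤ) - α - 1) * Real.exp (-x)
      ≤ ((α.factorial : ℝ) / ((k-1).factorial : ℝ)) *
          (4^α * (k:ℝ)^(2*α) / (α.factorial : ℝ)^2) * x ^ ((k:ℤ) - α - 1) * Real.exp (-x) := by
        have hzpos : (0:ℝ) ≤ x ^ ((k:ℤ) - α - 1) := (zpow_pos hx0 _).le
        have hcpos : (0:ℝ) ≤ (α.factorial : ℝ) / ((k-1).factorial : ℝ) := by positivity
        have h5 := mul_le_mul_of_nonneg_left hS hcpos
        have h6 := mul_le_mul_of_nonneg_right h5 hzpos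
        exact mul_le_mul_of_nonneg_right h6 (Real.exp_pos _).le
    _ = ((α.factorial : ℝ) / ((k-1).factorial : ℝ)) *
          (4^α * (k:ℝ)^(2*α) / (α.factorial : ℝ)^2) *
          (x ^ (k-(2*α+3)) * x^(α+2)) * Real.exp (-x) := by rw [hzp]
    _ ≤ ((α.factorial : ℝ) / ((k-1).factorial : ℝ)) *
          (4^α * (k:ℝ)^(2*α) / (α.factorial : ℝ)^2) *
          (x ^ (k-(2*α+3)) * (R^(α+1) * (k:ℝ))) * Real.exp (-x) := by
        have hcpos : (0:ℝ) ≤ ((α.factorial : ℝ) / ((k-1).factorial : ℝ)) *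
            (4^α * (k:ℝ)^(2*α) / (α.factorial : ℝ)^2) := by positivity
        have h7 : x ^ (k-(2*α+3)) * x^(α+2) ≤ x ^ (k-(2*α+3)) * (R^(α+1) * (k:ℝ)) := by
          apply mul_le_mul_of_nonneg_left hx2
          positivity
        have h8 := mul_le_mul_of_nonneg_left h7 hcpos
        exact mul_le_mul_of_nonneg_right h8 (Real.exp_pos _).le
    _ = (((α.factorial : ℝ) / ((k-1).factorial : ℝ)) *
          (4^α * (k:ℝ)^(2*α) / (α.factorial : ℝ)^2) * ((k:ℝ) * R^(α+1))) *
          (x ^ (k-(2*α+3)) * Real.exp (-x)) := by ring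
    _ ≤ ((3:ℝ)^(2*α+1) * R^(α+1) / ((k-(2*α+3)).factorial : ℝ)) *
          (x ^ (k-(2*α+3)) * Real.exp (-x)) := by
        apply mul_le_mul_of_nonneg_right hcoef
        positivity

end GinAux

/-- Comparison of the tails of the radii of the Landau-level-`α` Ginibre-type ensemble with
Gamma tails: (i) for `k ≥ R > 2α+2`,
`P(Γ_k^{(α)} ≤ R) ≤ 3^{2α+1} R^{α+1} P(Γ_{k−2α−2} ≤ R)`;
(ii) for `1 ≤ k ≤ R`, `P(Γ_k^{(α)} ≥ R) ≤ 4^α k^α P(Γ_{k+α} ≥ R)`. -/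
theorem ginibre_type_tail_comparison (α : ℕ) :
    (∀ k : ℕ, ∀ R : ℝ, (2 * (α : ℝ) + 2) < R → R ≤ (k : ℝ) →
      ginTypeCdf α k R ≤ 3 ^ (2 * α + 1) * R ^ (α + 1) * gammaCdf (k - (2 * α + 2)) R) ∧
    (∀ k : ℕ, ∀ R : ℝ, 1 ≤ k → (k : ℝ) ≤ R →
      1 - ginTypeCdf α k R ≤ 4 ^ α * (k : ℝ) ^ α * (1 - gammaCdf (k + α) R)) := by
  constructor
  · intro k R hR1 hRk
    have hk : 2*α+3 ≤ k := by
      by_contra h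
      push_neg at h
      have h2 : (k:ℝ) ≤ 2*(α:ℝ)+2 := by
        have : k ≤ 2*α+2 := by omega
        have := (Nat.cast_le (α := ℝ)).mpr this
        push_cast at this
        linarith
      linarith
    have hα2 : (0:ℝ) ≤ 2*(α:ℝ)+2 := by positivity
    have hR0 : (0:ℝ) < R := by linarith
    have hj : k - (2*α+2) - 1 = k - (2*α+3) := by omega
    rw [ginTypeCdf, gammaCdf, hj]
    have hRHS : (3:ℝ) ^ (2*α+1) * R^(α+1) *
        ((1 / ((k-(2*α+3)).factorial : ℝ)) * ∫ x in Set.Ioc (0:ℝ) R, x^(k-(2*α+3)) * Real.exp (-x))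
        = ∫ x in Set.Ioc (0:ℝ) R,
            ((3:ℝ)^(2*α+1) * R^(α+1) / ((k-(2*α+3)).factorial : ℝ)) *
              (x^(k-(2*α+3)) * Real.exp (-x)) := by
      rw [integral_const_mul]
      ring
    rw [hRHS]
    refine setIntegral_mono_on
      ((GinAux.pdf_integrableOn α k (by omega)).mono_set Set.Ioc_subset_Ioi_self)
      (((GinAux.integrableOn_pow_exp _).mono_set Set.Ioc_subset_Ioi_self).const_mul _)
      measurableSet_Ioc (fun x hx => GinAux.pointwise_i α k hk hRk hx)
  · intro k R hk1 hkR
    have hR0 : (0:ℝ) ≤ R := by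
      have : (1:ℝ) ≤ (k:ℝ) := by exact_mod_cast hk1
      linarith
    rw [GinAux.gin_tail α k hk1 R hR0, GinAux.gamma_tail (k+α) R hR0]
    have hRHS : (4:ℝ) ^ α * (k:ℝ)^α *
        ((1 / ((k+α-1).factorial : ℝ)) * ∫ x in Set.Ioi R, x^(k+α-1) * Real.exp (-x))
        = ∫ x in Set.Ioi R,
            ((4:ℝ)^α * (k:ℝ)^α / ((k+α-1).factorial : ℝ)) * (x^(k+α-1) * Real.exp (-x)) := by
      rw [integral_const_mul]
      ring
    rw [hRHS]
    refine setIntegral_mono_on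
      ((GinAux.pdf_integrableOn α k hk1).mono_set (Set.Ioi_subset_Ioi hR0))
      (((GinAux.integrableOn_pow_exp _).mono_set (Set.Ioi_subset_Ioi hR0)).const_mul _)
      measurableSet_Ioi (fun x hx => GinAux.pointwise_ii α k hk1 hkR hx)


end
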